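/- For block sizes (2,3,2) (so n = 7), the rational function A = (L_{(3,7)} L_{(4,6)}) / (L_{(3,6)} M_{(1,4)} M_{(4,7)}) is invariant under conjugation by all invertible upper-triangular 7×7 matrices, where L_{(3,6)} = x_{2,3}x_{3,6} + x_{2,4}x_{4,6} + x_{2,5}x_{5,6}, L_{(3,7)} = x_{2,3}·det[[x_{3,6},x_{3,7}],[x_{5,6},x_{5,7}]] + x_{2,4}·det[[x_{4,6},x_{4,7}],[x_{5,6},x_{5,7}]], L_{(4,6)} = det[[x_{1,3},x_{1,4}],[x_{2,3},x_{2,4}]]·x_{4,6} + det[[x_{1,3},x_{1,5}],[x_{2,3},x_{2,5}]]·x_{5,6}, M_{(1,4)} = det[[x_{1,3},x_{1,4}],[x_{2,3},x_{2,4}]], M_{(4,7)} = det[[x_{4,6},x_{4,7}],[x_{5,6},x_{5,7}]]. -/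
import Mathlib


open Matrix

/-- Block map for the block sizes `(2,3,2)` of `gl(7)`: blocks `{1,2}, {3,4,5}, {6,7}`. -/
def blk7 (i : Fin 7) : ℕ := if (i : ℕ) < 2 then 0 else if (i : ℕ) < 5 then 1 else 2

def L36 {K : Type*} [Field K] (X : Matrix (Fin 7) (Fin 7) K) : K :=
  X 1 2 * X 2 5 + X 1 3 * X 3 5 + X 1 4 * X 4 5

def L37 {K : Type*} [Field K] (X : Matrix (Fin 7) (Fin 7) K) : K :=
  X 1 2 * (X 2 5 * X 4 6 - X 2 6 * X 4 5) + X 1 3 * (X 3 5 * X 4 6 - X 3 6 * X 4 5)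

def L46 {K : Type*} [Field K] (X : Matrix (Fin 7) (Fin 7) K) : K :=
  (X 0 2 * X 1 3 - X 0 3 * X 1 2) * X 3 5 + (X 0 2 * X 1 4 - X 0 4 * X 1 2) * X 4 5

def M14 {K : Type*} [Field K] (X : Matrix (Fin 7) (Fin 7) K) : K :=
  X 0 2 * X 1 3 - X 0 3 * X 1 2

def M47 {K : Type*} [Field K] (X : Matrix (Fin 7) (Fin 7) K) : K :=
  X 3 5 * X 4 6 - X 3 6 * X 4 5

/-- For block sizes `(2,3,2)`, the rational function
`A = (L_{(3,7)} L_{(4,6)}) / (L_{(3,6)} M_{(1,4)} M_{(4,7)})` is invariant under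
conjugation of the nilradical matrix `X` by any invertible upper-triangular matrix. -/
theorem A_37_B_invariant {K : Type*} [Field K] [CharZero K]
    (X g : Matrix (Fin 7) (Fin 7) K)
    (hX : ∀ a b : Fin 7, ¬ blk7 a < blk7 b → X a b = 0)
    (hg : ∀ a b : Fin 7, b < a → g a b = 0) (hgdet : IsUnit g.det)
    (hden : L36 X * M14 X * M47 X ≠ 0) :
    L37 (g * X * g⁻¹) * L46 (g * X * g⁻¹) /
      (L36 (g * X * g⁻¹) * M14 (g * X * g⁻¹) * M47 (g * X * g⁻¹))
      = L37 X * L46 X / (L36 X * M14 X * M47 X) := by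
  have hgi : Invertible g := g.invertibleOfIsUnitDet hgdet
  have hBT : g.BlockTriangular (id : Fin 7 → Fin 7) := fun i j hij => hg i j hij
  have hhBT := Matrix.blockTriangular_inv_of_blockTriangular hBT
  set h := g⁻¹ with hhdef
  have hh0 : ∀ a b : Fin 7, b < a → h a b = 0 := fun a b hab => hhBT hab
  have hhg : h * g = 1 := Matrix.nonsing_inv_mul g hgdet
  have hX00 : X 0 0 = 0 := hX 0 0 (by decide)
  have hX01 : X 0 1 = 0 := hX 0 1 (by decide)
  have hX10 : X 1 0 = 0 := hX 1 0 (by decide)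
  have hX11 : X 1 1 = 0 := hX 1 1 (by decide)
  have hX20 : X 2 0 = 0 := hX 2 0 (by decide)
  have hX21 : X 2 1 = 0 := hX 2 1 (by decide)
  have hX22 : X 2 2 = 0 := hX 2 2 (by decide)
  have hX23 : X 2 3 = 0 := hX 2 3 (by decide)
  have hX24 : X 2 4 = 0 := hX 2 4 (by decide)
  have hX30 : X 3 0 = 0 := hX 3 0 (by decide)
  have hX31 : X 3 1 = 0 := hX 3 1 (by decide)
  have hX32 : X 3 2 = 0 := hX 3 2 (by decide)
  have hX33 : X 3 3 = 0 := hX 3 3 (by decide)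
  have hX34 : X 3 4 = 0 := hX 3 4 (by decide)
  have hX40 : X 4 0 = 0 := hX 4 0 (by decide)
  have hX41 : X 4 1 = 0 := hX 4 1 (by decide)
  have hX42 : X 4 2 = 0 := hX 4 2 (by decide)
  have hX43 : X 4 3 = 0 := hX 4 3 (by decide)
  have hX44 : X 4 4 = 0 := hX 4 4 (by decide)
  have hX50 : X 5 0 = 0 := hX 5 0 (by decide)
  have hX51 : X 5 1 = 0 := hX 5 1 (by decide)
  have hX52 : X 5 2 = 0 := hX 5 2 (by decide)
  have hX53 : X 5 3 = 0 := hX 5 3 (by decide)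
  have hX54 : X 5 4 = 0 := hX 5 4 (by decide)
  have hX55 : X 5 5 = 0 := hX 5 5 (by decide)
  have hX56 : X 5 6 = 0 := hX 5 6 (by decide)
  have hX60 : X 6 0 = 0 := hX 6 0 (by decide)
  have hX61 : X 6 1 = 0 := hX 6 1 (by decide)
  have hX62 : X 6 2 = 0 := hX 6 2 (by decide)
  have hX63 : X 6 3 = 0 := hX 6 3 (by decide)
  have hX64 : X 6 4 = 0 := hX 6 4 (by decide)
  have hX65 : X 6 5 = 0 := hX 6 5 (by decide)
  have hX66 : X 6 6 = 0 := hX 6 6 (by decide)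
  have hg10 : g 1 0 = 0 := hg 1 0 (by decide)
  have hg20 : g 2 0 = 0 := hg 2 0 (by decide)
  have hg21 : g 2 1 = 0 := hg 2 1 (by decide)
  have hg30 : g 3 0 = 0 := hg 3 0 (by decide)
  have hg31 : g 3 1 = 0 := hg 3 1 (by decide)
  have hg32 : g 3 2 = 0 := hg 3 2 (by decide)
  have hg40 : g 4 0 = 0 := hg 4 0 (by decide)
  have hg41 : g 4 1 = 0 := hg 4 1 (by decide)
  have hg42 : g 4 2 = 0 := hg 4 2 (by decide)
  have hg43 : g 4 3 = 0 := hg 4 3 (by decide)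
  have hg50 : g 5 0 = 0 := hg 5 0 (by decide)
  have hg51 : g 5 1 = 0 := hg 5 1 (by decide)
  have hg52 : g 5 2 = 0 := hg 5 2 (by decide)
  have hg53 : g 5 3 = 0 := hg 5 3 (by decide)
  have hg54 : g 5 4 = 0 := hg 5 4 (by decide)
  have hg60 : g 6 0 = 0 := hg 6 0 (by decide)
  have hg61 : g 6 1 = 0 := hg 6 1 (by decide)
  have hg62 : g 6 2 = 0 := hg 6 2 (by decide)
  have hg63 : g 6 3 = 0 := hg 6 3 (by decide)
  have hg64 : g 6 4 = 0 := hg 6 4 (by decide)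
  have hg65 : g 6 5 = 0 := hg 6 5 (by decide)
  have hh10 : h 1 0 = 0 := hh0 1 0 (by decide)
  have hh20 : h 2 0 = 0 := hh0 2 0 (by decide)
  have hh21 : h 2 1 = 0 := hh0 2 1 (by decide)
  have hh30 : h 3 0 = 0 := hh0 3 0 (by decide)
  have hh31 : h 3 1 = 0 := hh0 3 1 (by decide)
  have hh32 : h 3 2 = 0 := hh0 3 2 (by decide)
  have hh40 : h 4 0 = 0 := hh0 4 0 (by decide)
  have hh41 : h 4 1 = 0 := hh0 4 1 (by decide)
  have hh42 : h 4 2 = 0 := hh0 4 2 (by decide)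
  have hh43 : h 4 3 = 0 := hh0 4 3 (by decide)
  have hh50 : h 5 0 = 0 := hh0 5 0 (by decide)
  have hh51 : h 5 1 = 0 := hh0 5 1 (by decide)
  have hh52 : h 5 2 = 0 := hh0 5 2 (by decide)
  have hh53 : h 5 3 = 0 := hh0 5 3 (by decide)
  have hh54 : h 5 4 = 0 := hh0 5 4 (by decide)
  have hh60 : h 6 0 = 0 := hh0 6 0 (by decide)
  have hh61 : h 6 1 = 0 := hh0 6 1 (by decide)
  have hh62 : h 6 2 = 0 := hh0 6 2 (by decide)
  have hh63 : h 6 3 = 0 := hh0 6 3 (by decide)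
  have hh64 : h 6 4 = 0 := hh0 6 4 (by decide)
  have hh65 : h 6 5 = 0 := hh0 6 5 (by decide)
  have r00 : h 0 0 * g 0 0 = 1 := by
    have e : (h * g) 0 0 = (1 : Matrix (Fin 7) (Fin 7) K) 0 0 := by rw [hhg]
    simpa [Matrix.mul_apply, Fin.sum_univ_seven, hg10, hg20, hg21, hg30, hg31, hg32, hg40, hg41, hg42, hg43, hg50, hg51, hg52, hg53, hg54, hg60, hg61, hg62, hg63, hg64, hg65, hh10, hh20, hh21, hh30, hh31, hh32, hh40, hh41, hh42, hh43, hh50, hh51, hh52, hh53, hh54, hh60, hh61, hh62, hh63, hh64, hh65, Matrix.one_apply] using e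
  have r11 : h 1 1 * g 1 1 = 1 := by
    have e : (h * g) 1 1 = (1 : Matrix (Fin 7) (Fin 7) K) 1 1 := by rw [hhg]
    simpa [Matrix.mul_apply, Fin.sum_univ_seven, hg10, hg20, hg21, hg30, hg31, hg32, hg40, hg41, hg42, hg43, hg50, hg51, hg52, hg53, hg54, hg60, hg61, hg62, hg63, hg64, hg65, hh10, hh20, hh21, hh30, hh31, hh32, hh40, hh41, hh42, hh43, hh50, hh51, hh52, hh53, hh54, hh60, hh61, hh62, hh63, hh64, hh65, Matrix.one_apply] using e
  have r22 : h 2 2 * g 2 2 = 1 := by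
    have e : (h * g) 2 2 = (1 : Matrix (Fin 7) (Fin 7) K) 2 2 := by rw [hhg]
    simpa [Matrix.mul_apply, Fin.sum_univ_seven, hg10, hg20, hg21, hg30, hg31, hg32, hg40, hg41, hg42, hg43, hg50, hg51, hg52, hg53, hg54, hg60, hg61, hg62, hg63, hg64, hg65, hh10, hh20, hh21, hh30, hh31, hh32, hh40, hh41, hh42, hh43, hh50, hh51, hh52, hh53, hh54, hh60, hh61, hh62, hh63, hh64, hh65, Matrix.one_apply] using e
  have r33 : h 3 3 * g 3 3 = 1 := by
    have e : (h * g) 3 3 = (1 : Matrix (Fin 7) (Fin 7) K) 3 3 := by rw [hhg]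
    simpa [Matrix.mul_apply, Fin.sum_univ_seven, hg10, hg20, hg21, hg30, hg31, hg32, hg40, hg41, hg42, hg43, hg50, hg51, hg52, hg53, hg54, hg60, hg61, hg62, hg63, hg64, hg65, hh10, hh20, hh21, hh30, hh31, hh32, hh40, hh41, hh42, hh43, hh50, hh51, hh52, hh53, hh54, hh60, hh61, hh62, hh63, hh64, hh65, Matrix.one_apply] using e
  have r44 : h 4 4 * g 4 4 = 1 := by
    have e : (h * g) 4 4 = (1 : Matrix (Fin 7) (Fin 7) K) 4 4 := by rw [hhg]
    simpa [Matrix.mul_apply, Fin.sum_univ_seven, hg10, hg20, hg21, hg30, hg31, hg32, hg40, hg41, hg42, hg43, hg50, hg51, hg52, hg53, hg54, hg60, hg61, hg62, hg63, hg64, hg65, hh10, hh20, hh21, hh30, hh31, hh32, hh40, hh41, hh42, hh43, hh50, hh51, hh52, hh53, hh54, hh60, hh61, hh62, hh63, hh64, hh65, Matrix.one_apply] using e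
  have r55 : h 5 5 * g 5 5 = 1 := by
    have e : (h * g) 5 5 = (1 : Matrix (Fin 7) (Fin 7) K) 5 5 := by rw [hhg]
    simpa [Matrix.mul_apply, Fin.sum_univ_seven, hg10, hg20, hg21, hg30, hg31, hg32, hg40, hg41, hg42, hg43, hg50, hg51, hg52, hg53, hg54, hg60, hg61, hg62, hg63, hg64, hg65, hh10, hh20, hh21, hh30, hh31, hh32, hh40, hh41, hh42, hh43, hh50, hh51, hh52, hh53, hh54, hh60, hh61, hh62, hh63, hh64, hh65, Matrix.one_apply] using e
  have r66 : h 6 6 * g 6 6 = 1 := by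
    have e : (h * g) 6 6 = (1 : Matrix (Fin 7) (Fin 7) K) 6 6 := by rw [hhg]
    simpa [Matrix.mul_apply, Fin.sum_univ_seven, hg10, hg20, hg21, hg30, hg31, hg32, hg40, hg41, hg42, hg43, hg50, hg51, hg52, hg53, hg54, hg60, hg61, hg62, hg63, hg64, hg65, hh10, hh20, hh21, hh30, hh31, hh32, hh40, hh41, hh42, hh43, hh50, hh51, hh52, hh53, hh54, hh60, hh61, hh62, hh63, hh64, hh65, Matrix.one_apply] using e
  have r23 : h 2 2 * g 2 3 + h 2 3 * g 3 3 = 0 := by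
    have e : (h * g) 2 3 = (1 : Matrix (Fin 7) (Fin 7) K) 2 3 := by rw [hhg]
    simpa [Matrix.mul_apply, Fin.sum_univ_seven, hg10, hg20, hg21, hg30, hg31, hg32, hg40, hg41, hg42, hg43, hg50, hg51, hg52, hg53, hg54, hg60, hg61, hg62, hg63, hg64, hg65, hh10, hh20, hh21, hh30, hh31, hh32, hh40, hh41, hh42, hh43, hh50, hh51, hh52, hh53, hh54, hh60, hh61, hh62, hh63, hh64, hh65, Matrix.one_apply] using e
  have r24 : h 2 2 * g 2 4 + h 2 3 * g 3 4 + h 2 4 * g 4 4 = 0 := by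
    have e : (h * g) 2 4 = (1 : Matrix (Fin 7) (Fin 7) K) 2 4 := by rw [hhg]
    simpa [Matrix.mul_apply, Fin.sum_univ_seven, hg10, hg20, hg21, hg30, hg31, hg32, hg40, hg41, hg42, hg43, hg50, hg51, hg52, hg53, hg54, hg60, hg61, hg62, hg63, hg64, hg65, hh10, hh20, hh21, hh30, hh31, hh32, hh40, hh41, hh42, hh43, hh50, hh51, hh52, hh53, hh54, hh60, hh61, hh62, hh63, hh64, hh65, Matrix.one_apply] using e
  have r34 : h 3 3 * g 3 4 + h 3 4 * g 4 4 = 0 := by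
    have e : (h * g) 3 4 = (1 : Matrix (Fin 7) (Fin 7) K) 3 4 := by rw [hhg]
    simpa [Matrix.mul_apply, Fin.sum_univ_seven, hg10, hg20, hg21, hg30, hg31, hg32, hg40, hg41, hg42, hg43, hg50, hg51, hg52, hg53, hg54, hg60, hg61, hg62, hg63, hg64, hg65, hh10, hh20, hh21, hh30, hh31, hh32, hh40, hh41, hh42, hh43, hh50, hh51, hh52, hh53, hh54, hh60, hh61, hh62, hh63, hh64, hh65, Matrix.one_apply] using e
  have t36 : L36 (g * X * h) = g 1 1 * h 5 5 * L36 X := by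
    simp only [L36, Matrix.mul_apply, Fin.sum_univ_seven, hX00, hX01, hX10, hX11, hX20, hX21, hX22, hX23, hX24, hX30, hX31, hX32, hX33, hX34, hX40, hX41, hX42, hX43, hX44, hX50, hX51, hX52, hX53, hX54, hX55, hX56, hX60, hX61, hX62, hX63, hX64, hX65, hX66, hg10, hg20, hg21, hg30, hg31, hg32, hg40, hg41, hg42, hg43, hg50, hg51, hg52, hg53, hg54, hg60, hg61, hg62, hg63, hg64, hg65, hh10, hh20, hh21, hh30, hh31, hh32, hh40, hh41, hh42, hh43, hh50, hh51, hh52, hh53, hh54, hh60, hh61, hh62, hh63, hh64, hh65, mul_zero, zero_mul, add_zero, zero_add]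
    linear_combination (g 1 1 * h 5 5 * X 1 2 * X 2 5) * r22 +
      (g 1 1 * h 5 5 * X 1 2 * X 3 5) * r23 + (g 1 1 * h 5 5 * X 1 2 * X 4 5) * r24 +
      (g 1 1 * h 5 5 * X 1 3 * X 3 5) * r33 + (g 1 1 * h 5 5 * X 1 3 * X 4 5) * r34 +
      (g 1 1 * h 5 5 * X 1 4 * X 4 5) * r44
  have t37 : L37 (g * X * h) = g 1 1 * g 4 4 * h 5 5 * h 6 6 * L37 X := by
    simp only [L37, Matrix.mul_apply, Fin.sum_univ_seven, hX00, hX01, hX10, hX11, hX20, hX21, hX22, hX23, hX24, hX30, hX31, hX32, hX33, hX34, hX40, hX41, hX42, hX43, hX44, hX50, hX51, hX52, hX53, hX54, hX55, hX56, hX60, hX61, hX62, hX63, hX64, hX65, hX66, hg10, hg20, hg21, hg30, hg31, hg32, hg40, hg41, hg42, hg43, hg50, hg51, hg52, hg53, hg54, hg60, hg61, hg62, hg63, hg64, hg65, hh10, hh20, hh21, hh30, hh31, hh32, hh40, hh41, hh42, hh43, hh50, hh51, hh52, hh53, hh54, hh60, hh61, hh62, hh63, hh64, hh65, mul_zero,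 zero_mul, add_zero, zero_add]
    linear_combination (g 1 1 * g 4 4 * h 5 5 * h 6 6 * X 1 2 * (X 2 5 * X 4 6 - X 2 6 * X 4 5)) * r22 +
      (g 1 1 * g 4 4 * h 5 5 * h 6 6 * X 1 2 * (X 3 5 * X 4 6 - X 3 6 * X 4 5)) * r23 +
      (g 1 1 * g 4 4 * h 5 5 * h 6 6 * X 1 3 * (X 3 5 * X 4 6 - X 3 6 * X 4 5)) * r33
  have t46 : L46 (g * X * h) = g 0 0 * g 1 1 * h 2 2 * h 5 5 * L46 X := by
    simp only [L46, Matrix.mul_apply, Fin.sum_univ_seven, hX00, hX01, hX10, hX11, hX20, hX21, hX22, hX23, hX24, hX30, hX31, hX32, hX33, hX34, hX40, hX41, hX42, hX43, hX44, hX50, hX51, hX52, hX53, hX54, hX55, hX56, hX60, hX61, hX62, hX63, hX64, hX65, hX66, hg10, hg20, hg21, hg30, hg31, hg32, hg40, hg41, hg42, hg43, hg50, hg51, hg52, hg53, hg54, hg60, hg61, hg62, hg63, hg64, hg65, hh10, hh20, hh21, hh30, hh31, hh32, hh40, hh41, hh42, hh43, hh50, hh51, hh52, hh53, hh54, hh60,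 hh61, hh62, hh63, hh64, hh65, mul_zero, zero_mul, add_zero, zero_add]
    linear_combination (g 0 0 * g 1 1 * h 2 2 * h 5 5 * (X 0 2 * X 1 3 - X 0 3 * X 1 2) * X 3 5) * r33 +
      (g 0 0 * g 1 1 * h 2 2 * h 5 5 * (X 0 2 * X 1 3 - X 0 3 * X 1 2) * X 4 5) * r34 +
      (g 0 0 * g 1 1 * h 2 2 * h 5 5 * (X 0 2 * X 1 4 - X 0 4 * X 1 2) * X 4 5) * r44
  have t14 : M14 (g * X * h) = g 0 0 * g 1 1 * h 2 2 * h 3 3 * M14 X := by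
    simp only [M14, Matrix.mul_apply, Fin.sum_univ_seven, hX00, hX01, hX10, hX11, hX20, hX21, hX22, hX23, hX24, hX30, hX31, hX32, hX33, hX34, hX40, hX41, hX42, hX43, hX44, hX50, hX51, hX52, hX53, hX54, hX55, hX56, hX60, hX61, hX62, hX63, hX64, hX65, hX66, hg10, hg20, hg21, hg30, hg31, hg32, hg40, hg41, hg42, hg43, hg50, hg51, hg52, hg53, hg54, hg60, hg61, hg62, hg63, hg64, hg65, hh10, hh20, hh21, hh30, hh31, hh32, hh40, hh41, hh42, hh43, hh50, hh51, hh52, hh53, hh54, hh60, hh61, hh62, hh63, hh64, hh65, mul_zero, zero_mul, add_zero, zero_add]; ring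
  have t47 : M47 (g * X * h) = g 3 3 * g 4 4 * h 5 5 * h 6 6 * M47 X := by
    simp only [M47, Matrix.mul_apply, Fin.sum_univ_seven, hX00, hX01, hX10, hX11, hX20, hX21, hX22, hX23, hX24, hX30, hX31, hX32, hX33, hX34, hX40, hX41, hX42, hX43, hX44, hX50, hX51, hX52, hX53, hX54, hX55, hX56, hX60, hX61, hX62, hX63, hX64, hX65, hX66, hg10, hg20, hg21, hg30, hg31, hg32, hg40, hg41, hg42, hg43, hg50, hg51, hg52, hg53, hg54, hg60, hg61, hg62, hg63, hg64, hg65, hh10, hh20, hh21, hh30, hh31, hh32, hh40, hh41, hh42, hh43, hh50, hh51, hh52, hh53, hh54, hh60, hh61, hh62, hh63, hh64, hh65, mul_zero, zero_mul, add_zero, zero_add]; ring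
  rw [t36, t37, t46, t14, t47]
  have ng0 : g 0 0 ≠ 0 := right_ne_zero_of_mul_eq_one r00
  have ng1 : g 1 1 ≠ 0 := right_ne_zero_of_mul_eq_one r11
  have ng3 : g 3 3 ≠ 0 := right_ne_zero_of_mul_eq_one r33
  have ng4 : g 4 4 ≠ 0 := right_ne_zero_of_mul_eq_one r44
  have nh2 : h 2 2 ≠ 0 := left_ne_zero_of_mul_eq_one r22
  have nh3 : h 3 3 ≠ 0 := left_ne_zero_of_mul_eq_one r33
  have nh5 : h 5 5 ≠ 0 := left_ne_zero_of_mul_eq_one r55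
  have nh6 : h 6 6 ≠ 0 := left_ne_zero_of_mul_eq_one r66
  obtain ⟨h12, n47⟩ := mul_ne_zero_iff.mp hden
  obtain ⟨n36, n14⟩ := mul_ne_zero_iff.mp h12
  have hdenY : g 1 1 * h 5 5 * L36 X * (g 0 0 * g 1 1 * h 2 2 * h 3 3 * M14 X) *
      (g 3 3 * g 4 4 * h 5 5 * h 6 6 * M47 X) ≠ 0 := by
    apply_rules [mul_ne_zero]
  rw [div_eq_div_iff hdenY hden]
  linear_combination (-(g 0 0 * g 1 1 ^ 2 * g 4 4 * h 2 2 * h 5 5 ^ 2 * h 6 6 *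
    L37 X * L46 X * L36 X * M14 X * M47 X)) * r33
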